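/- For every n : ℕ and every n-qubit Pauli index a, the size of a is encoded by the diagonal OTOCs against weight-one Pauli strings: ∑_q trace((P a)ᴴ * P q * P a * (P q)ᴴ) = (2^n : ℂ) * (3 * n - 4 * s a), where the sum runs over the 3n Pauli indices q of weight one, and s a denotes the weight of a. -/

import Mathlib

open Matrix

/-- An `n`-qubit Pauli index: a pair `(a_z, a_x)` of bit strings. -/
abbrev PauliIdx (n : ℕ) := (Fin n → ZMod 2) × (Fin n → ZMod 2)

/-- The `n`-qubit Pauli string associated with a Pauli index. -/
def P {n : ℕ} (a : PauliIdx n) :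
    Matrix (Fin n → ZMod 2) (Fin n → ZMod 2) ℂ :=
  Matrix.of fun i j => ∏ t : Fin n,
    ((if a.1 t * i t = 1 then (-1 : ℂ) else 1) * (if i t = j t + a.2 t then 1 else 0))

/-- The weight (size) of a Pauli index: the number of sites where it acts
non-trivially. -/
def pauliWeight {n : ℕ} (a : PauliIdx n) : ℕ :=
  (Finset.univ.filter fun t : Fin n => (a.1 t, a.2 t) ≠ ((0 : ZMod 2), (0 : ZMod 2))).card

namespace PauliAux
variable {n : ℕ}

noncomputable def sg (u v : Fin n → ZMod 2) : ℂ :=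
  ∏ t, (if u t * v t = 1 then (-1 : ℂ) else 1)

lemma sg_add_right (u v w : Fin n → ZMod 2) : sg u (v + w) = sg u v * sg u w := by
  unfold sg
  rw [← Finset.prod_mul_distrib]
  refine Finset.prod_congr rfl fun t _ => ?_
  have h : ∀ x y z : ZMod 2, (if x * (y + z) = 1 then (-1 : ℂ) else 1) =
      (if x * y = 1 then (-1 : ℂ) else 1) * (if x * z = 1 then (-1 : ℂ) else 1) := by
    intro x y z
    fin_cases x <;> fin_cases y <;> fin_cases z <;> simp +decide <;> norm_num
  simpa using h (u t) (v t) (w t)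

lemma sg_comm (u v : Fin n → ZMod 2) : sg u v = sg v u := by
  unfold sg
  exact Finset.prod_congr rfl fun t _ => by rw [mul_comm]

lemma sg_add_left (u v w : Fin n → ZMod 2) : sg (u + v) w = sg u w * sg v w := by
  rw [sg_comm, sg_add_right, sg_comm w u, sg_comm w v]

lemma sg_mul_self (u v : Fin n → ZMod 2) : sg u v * sg u v = 1 := by
  unfold sg
  rw [← Finset.prod_mul_distrib]
  refine Finset.prod_eq_one fun t _ => ?_
  split <;> norm_num

lemma sg_sq (u v : Fin n → ZMod 2) : sg u v ^ 2 = 1 := by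
  rw [sq, sg_mul_self]

lemma sg_conj (u v : Fin n → ZMod 2) : (starRingEnd ℂ) (sg u v) = sg u v := by
  unfold sg
  rw [map_prod]
  refine Finset.prod_congr rfl fun t _ => ?_
  split <;> simp

lemma addself (x : Fin n → ZMod 2) : x + x = 0 := by
  funext t
  have h : ∀ y : ZMod 2, y + y = 0 := by decide
  exact h (x t)

lemma P_apply (a : PauliIdx n) (i j : Fin n → ZMod 2) :
    P a i j = if i = j + a.2 then sg a.1 i else 0 := by
  show (∏ t : Fin n, _) = _
  rw [Finset.prod_mul_distrib]
  by_cases h : i = j + a.2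
  · rw [if_pos h]
    have : (∏ t : Fin n, (if i t = j t + a.2 t then (1:ℂ) else 0)) = 1 := by
      refine Finset.prod_eq_one fun t _ => ?_
      rw [if_pos (by rw [h]; rfl)]
    rw [this, mul_one]; rfl
  · rw [if_neg h]
    obtain ⟨t, ht⟩ := Function.ne_iff.mp h
    have : (∏ t : Fin n, (if i t = j t + a.2 t then (1:ℂ) else 0)) = 0 :=
      Finset.prod_eq_zero (Finset.mem_univ t) (if_neg ht)
    rw [this, mul_zero]

lemma P_mul (a b : PauliIdx n) :
    P a * P b = sg b.1 a.2 • P (a.1 + b.1, a.2 + b.2) := by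
  ext i j
  rw [Matrix.mul_apply]
  simp only [P_apply, Matrix.smul_apply, smul_eq_mul]
  rw [Finset.sum_eq_single (j + b.2)]
  · rw [if_pos rfl]
    have hcond : (i = j + b.2 + a.2) ↔ (i = j + ((a.1 + b.1, a.2 + b.2) : PauliIdx n).2) := by
      constructor <;> intro h <;> rw [h] <;> ring_nf
    by_cases h : i = j + b.2 + a.2
    · rw [if_pos h, if_pos (hcond.mp h)]
      have hjb : j + b.2 = i + a.2 := by
        rw [h]
        have : j + b.2 + a.2 + a.2 = j + b.2 + (a.2 + a.2) := by ring
        rw [this, addself, add_zero]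
      rw [hjb, sg_add_right, sg_add_left]
      ring
    · rw [if_neg h, if_neg (fun hc => h (hcond.mpr hc)), zero_mul, mul_zero]
  · intro k _ hk
    rw [if_neg hk, mul_zero]
  · intro h
    exact absurd (Finset.mem_univ _) h

lemma P_conjTranspose (a : PauliIdx n) : (P a)ᴴ = sg a.1 a.2 • P a := by
  ext i j
  rw [Matrix.conjTranspose_apply, Matrix.smul_apply, smul_eq_mul, P_apply, P_apply]
  have hcond : (j = i + a.2) ↔ (i = j + a.2) := by
    constructor <;> intro h <;> rw [h] <;>
      (rw [add_assoc, addself, add_zero])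
  by_cases h : i = j + a.2
  · rw [if_pos (hcond.mpr h), if_pos h]
    have : sg a.1 j = sg a.1 i * sg a.1 a.2 := by
      rw [hcond.mpr h, sg_add_right]
    rw [this]
    simp only [star_mul', RCLike.star_def, sg_conj]
    ring
  · rw [if_neg (fun hc => h (hcond.mp hc)), if_neg h, star_zero, mul_zero]

lemma P_zero : P ((0, 0) : PauliIdx n) = 1 := by
  ext i j
  rw [P_apply, Matrix.one_apply]
  simp only [add_zero]
  by_cases h : i = j
  · rw [if_pos h, if_pos h]
    unfold sg
    refine Finset.prod_eq_one fun t _ => ?_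
    norm_num
  · rw [if_neg h, if_neg h]

lemma trace_otoc (a q : PauliIdx n) :
    ((P a)ᴴ * P q * P a * (P q)ᴴ).trace = sg q.1 a.2 * sg a.1 q.2 * 2 ^ n := by
  rw [P_conjTranspose, P_conjTranspose]
  rw [Matrix.smul_mul, Matrix.smul_mul, Matrix.mul_smul, Matrix.smul_mul]
  rw [P_mul, Matrix.smul_mul, Matrix.smul_mul, P_mul]
  have h1 : ((a.1 + q.1, a.2 + q.2) : PauliIdx n).1 + a.1 = q.1 := by
    show a.1 + q.1 + a.1 = q.1
    have : a.1 + q.1 + a.1 = q.1 + (a.1 + a.1) := by ring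
    rw [this, addself, add_zero]
  have h2 : ((a.1 + q.1, a.2 + q.2) : PauliIdx n).2 + a.2 = q.2 := by
    show a.2 + q.2 + a.2 = q.2
    have : a.2 + q.2 + a.2 = q.2 + (a.2 + a.2) := by ring
    rw [this, addself, add_zero]
  rw [show (((a.1 + q.1, a.2 + q.2) : PauliIdx n).1 + a.1,
      ((a.1 + q.1, a.2 + q.2) : PauliIdx n).2 + a.2) = (q.1, q.2) from by rw [h1, h2]]
  rw [show ((q.1, q.2) : PauliIdx n) = q from rfl]
  rw [Matrix.smul_mul, P_mul]
  rw [show ((q.1 + q.1, q.2 + q.2) : PauliIdx n) = (0, 0) from by rw [addself, addself]]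
  rw [P_zero]
  simp only [smul_smul, Matrix.trace_smul, Matrix.trace_one, smul_eq_mul]
  have hcard : (Fintype.card (Fin n → ZMod 2) : ℂ) = 2 ^ n := by
    rw [Fintype.card_fun]
    simp
  rw [hcard]
  have hadd : sg a.1 (((a.1 + q.1, a.2 + q.2) : PauliIdx n).2) = sg a.1 a.2 * sg a.1 q.2 := by
    show sg a.1 (a.2 + q.2) = _
    rw [sg_add_right]
  rw [hadd]
  have hsg1 := sg_sq a.1 a.2
  have hsg2 := sg_sq q.1 q.2
  linear_combination (sg q.1 q.2 ^ 2 * sg q.1 a.2 * sg a.1 q.2 * 2 ^ n) * hsg1 +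
    (sg q.1 a.2 * sg a.1 q.2 * 2 ^ n) * hsg2

/-- Weight-one Pauli index supported at `t`. -/
def e (t : Fin n) (p : ZMod 2 × ZMod 2) : PauliIdx n :=
  (fun s => if s = t then p.1 else 0, fun s => if s = t then p.2 else 0)

lemma sg_single (t : Fin n) (z : ZMod 2) (v : Fin n → ZMod 2) :
    sg (fun s => if s = t then z else 0) v = if z * v t = 1 then (-1 : ℂ) else 1 := by
  unfold sg
  rw [Finset.prod_eq_single t]
  · simp
  · intro s _ hs
    simp only [if_neg hs, zero_mul]
    rw [if_neg (by norm_num)]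
  · intro h
    exact absurd (Finset.mem_univ _) h

lemma sg_single_right (t : Fin n) (x : ZMod 2) (u : Fin n → ZMod 2) :
    sg u (fun s => if s = t then x else 0) = if u t * x = 1 then (-1 : ℂ) else 1 := by
  rw [sg_comm, sg_single, mul_comm]

lemma weight_e (t : Fin n) (p : ZMod 2 × ZMod 2) (hp : p ≠ 0) :
    pauliWeight (e t p) = 1 := by
  unfold pauliWeight e
  have : (Finset.univ.filter fun s : Fin n =>
      ((if s = t then p.1 else 0, if s = t then p.2 else 0) : ZMod 2 × ZMod 2)
        ≠ ((0 : ZMod 2), (0 : ZMod 2))) = {t} := by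
    ext s
    simp only [Finset.mem_filter, Finset.mem_univ, true_and, Finset.mem_singleton]
    by_cases hs : s = t
    · simp only [if_pos hs, hs, iff_true]
      intro hc
      exact hp (Prod.ext (congrArg Prod.fst hc) (congrArg Prod.snd hc))
    · simp [hs]
  rw [this, Finset.card_singleton]

lemma inner_sum (u v : ZMod 2) :
    ∑ p ∈ Finset.univ.filter (fun p : ZMod 2 × ZMod 2 => p ≠ 0),
      ((if p.1 * v = 1 then (-1 : ℂ) else 1) * (if u * p.2 = 1 then (-1 : ℂ) else 1)) =
    if (u, v) = ((0 : ZMod 2), (0 : ZMod 2)) then 3 else -1 := by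
  have hset : (Finset.univ.filter (fun p : ZMod 2 × ZMod 2 => p ≠ 0)) =
      {((0 : ZMod 2), (1 : ZMod 2)), (1, 0), (1, 1)} := by decide
  rw [hset, Finset.sum_insert (by decide), Finset.sum_insert (by decide),
    Finset.sum_singleton]
  fin_cases u <;> fin_cases v <;> simp +decide <;> norm_num

end PauliAux

open PauliAux in
/-- The size of a Pauli operator is encoded by the diagonal OTOCs against
weight-one Pauli strings. -/
theorem pauli_size_from_diagonal_otocs (n : ℕ) (a : PauliIdx n) :
    ∑ q ∈ Finset.univ.filter (fun q : PauliIdx n => pauliWeight q = 1),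
        ((P a)ᴴ * P q * P a * (P q)ᴴ).trace =
      (2 ^ n : ℂ) * (3 * (n : ℂ) - 4 * (pauliWeight a : ℂ)) := by
  classical
  rw [Finset.sum_congr rfl (fun q _ => trace_otoc a q)]
  rw [← Finset.sum_mul]
  -- reindex the sum via the product set
  have hbij : ∑ q ∈ Finset.univ.filter (fun q : PauliIdx n => pauliWeight q = 1),
      sg q.1 a.2 * sg a.1 q.2 =
      ∑ p ∈ (Finset.univ.filter (fun p : Fin n × (ZMod 2 × ZMod 2) => p.2 ≠ 0)),
        sg (e p.1 p.2).1 a.2 * sg a.1 (e p.1 p.2).2 := by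
    refine (Finset.sum_bij (fun p _ => e p.1 p.2) ?_ ?_ ?_ ?_).symm
    · intro p hp
      simp only [Finset.mem_filter, Finset.mem_univ, true_and] at hp ⊢
      exact weight_e p.1 p.2 hp
    · intro p hp p' hp' hee
      simp only [Finset.mem_filter, Finset.mem_univ, true_and] at hp hp'
      obtain ⟨t, z, x⟩ := p
      obtain ⟨t', z', x'⟩ := p'
      have h1 := congrFun (congrArg Prod.fst hee) t
      have h2 := congrFun (congrArg Prod.snd hee) t
      simp only [e, if_pos rfl] at h1 h2
      by_cases ht : t = t'
      · subst ht
        simp only [if_true] at h1 h2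
        simp_all
      · rw [if_neg ht] at h1 h2
        exact absurd (Prod.ext h1 h2) hp
    · intro q hq
      simp only [Finset.mem_filter, Finset.mem_univ, true_and] at hq
      obtain ⟨t, ht⟩ := Finset.card_eq_one.mp hq
      have htmem : t ∈ (Finset.univ.filter fun s : Fin n =>
          (q.1 s, q.2 s) ≠ ((0 : ZMod 2), (0 : ZMod 2))) := by
        rw [ht]; exact Finset.mem_singleton_self t
      simp only [Finset.mem_filter, Finset.mem_univ, true_and] at htmem
      refine ⟨(t, (q.1 t, q.2 t)), ?_, ?_⟩
      · simp only [Finset.mem_filter, Finset.mem_univ, true_and]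
        simpa [Prod.ext_iff] using htmem
      · have hout : ∀ s, s ≠ t → q.1 s = 0 ∧ q.2 s = 0 := by
          intro s hs
          have : s ∉ (Finset.univ.filter fun s : Fin n =>
              (q.1 s, q.2 s) ≠ ((0 : ZMod 2), (0 : ZMod 2))) := by
            rw [ht]; simpa using hs
          simp only [Finset.mem_filter, Finset.mem_univ, true_and, not_not] at this
          exact ⟨congrArg Prod.fst this, congrArg Prod.snd this⟩
        refine Prod.ext ?_ ?_ <;> funext s <;> by_cases hs : s = t
        · simp [e, hs]
        · simp [e, hs, (hout s hs).1]
        · simp [e, hs]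
        · simp [e, hs, (hout s hs).2]
    · intro p hp
      rfl
  rw [hbij]
  have hprod : (Finset.univ.filter (fun p : Fin n × (ZMod 2 × ZMod 2) => p.2 ≠ 0)) =
      Finset.univ ×ˢ (Finset.univ.filter (fun p : ZMod 2 × ZMod 2 => p ≠ 0)) := by
    ext p
    simp [Finset.mem_product]
  rw [hprod, Finset.sum_product]
  have hterm : ∀ t : Fin n,
      ∑ p ∈ Finset.univ.filter (fun p : ZMod 2 × ZMod 2 => p ≠ 0),
        sg (e t p).1 a.2 * sg a.1 (e t p).2 =
      if (a.1 t, a.2 t) = ((0 : ZMod 2), (0 : ZMod 2)) then 3 else -1 := by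
    intro t
    rw [← inner_sum (a.1 t) (a.2 t)]
    refine Finset.sum_congr rfl fun p _ => ?_
    rw [show (e t p).1 = fun s => if s = t then p.1 else 0 from rfl,
      show (e t p).2 = fun s => if s = t then p.2 else 0 from rfl,
      sg_single, sg_single_right]
  rw [Finset.sum_congr rfl (fun t _ => hterm t)]
  have hsplit : ∀ t : Fin n,
      (if (a.1 t, a.2 t) = ((0 : ZMod 2), (0 : ZMod 2)) then (3 : ℂ) else -1) =
      3 - 4 * (if (a.1 t, a.2 t) ≠ ((0 : ZMod 2), (0 : ZMod 2)) then 1 else 0) := by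
    intro t
    by_cases h : (a.1 t, a.2 t) = ((0 : ZMod 2), (0 : ZMod 2))
    · rw [if_pos h, if_neg (not_not_intro h)]
      ring
    · rw [if_neg h, if_pos h]
      ring
  rw [Finset.sum_congr rfl (fun t _ => hsplit t)]
  rw [Finset.sum_sub_distrib, ← Finset.mul_sum, Finset.sum_boole]
  simp only [Finset.sum_const, Finset.card_univ, Fintype.card_fin, nsmul_eq_mul]
  rw [show ((Finset.univ.filter fun t : Fin n =>
      (a.1 t, a.2 t) ≠ ((0 : ZMod 2), (0 : ZMod 2))).card : ℂ) = (pauliWeight a : ℂ) from rfl]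
  ring
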